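/- (First-step amplification.) Let Σ be a real d×d matrix and b ∈ ℝ^d with bᵀ Σ b ≠ 0. Then for every η, c ∈ ℝ and every x ∈ ℝ^d, setting g = c • (I − (bᵀΣb)⁻¹ Σ b bᵀ) x, one has ‖b − η g‖² = ‖b‖² + η² ‖g‖², and in particular ‖b − η g‖ ≥ ‖b‖. (A gradient-descent step on a batch-normalized neuron can only increase the magnitude of its weight vector; very small neurons become large after the first iteration.) -/

import Mathlib

open Matrix

/-- The Euclidean norm on `Fin d → ℝ`. -/
noncomputable def euclNorm {d : ℕ} (v : Fin d → ℝ) : ℝ := Real.sqrt (∑ i, v i ^ 2)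

lemma euclNorm_sq {d : ℕ} (v : Fin d → ℝ) : euclNorm v ^ 2 = ∑ i, v i ^ 2 := by
  rw [euclNorm, Real.sq_sqrt]
  positivity

lemma euclNorm_nonneg {d : ℕ} (v : Fin d → ℝ) : 0 ≤ euclNorm v :=
  Real.sqrt_nonneg _

/-- **first-step amplification.** For `bᵀΣb ≠ 0` and any learning rate
`η`, scalar `c` and data `x`, the gradient-descent step `b − ηg` with
`g = c (I − (bᵀΣb)⁻¹ Σ b bᵀ) x` satisfies `‖b − ηg‖² = ‖b‖² + η²‖g‖²`; in particular
`‖b − ηg‖ ≥ ‖b‖`. -/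
theorem first_step_amplification {d : ℕ}
    (S : Matrix (Fin d) (Fin d) ℝ) (b : Fin d → ℝ) (h : b ⬝ᵥ (S *ᵥ b) ≠ 0)
    (η c : ℝ) (x : Fin d → ℝ) :
    euclNorm (b - η • (c • (((1 : Matrix (Fin d) (Fin d) ℝ)
        - (b ⬝ᵥ (S *ᵥ b))⁻¹ • (S * vecMulVec b b)) *ᵥ x))) ^ 2
      = euclNorm b ^ 2 + η ^ 2 * euclNorm (c • (((1 : Matrix (Fin d) (Fin d) ℝ)
        - (b ⬝ᵥ (S *ᵥ b))⁻¹ • (S * vecMulVec b b)) *ᵥ x)) ^ 2 ∧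
    euclNorm b ≤ euclNorm (b - η • (c • (((1 : Matrix (Fin d) (Fin d) ℝ)
        - (b ⬝ᵥ (S *ᵥ b))⁻¹ • (S * vecMulVec b b)) *ᵥ x))) := by
  set g : Fin d → ℝ := c • (((1 : Matrix (Fin d) (Fin d) ℝ)
      - (b ⬝ᵥ (S *ᵥ b))⁻¹ • (S * vecMulVec b b)) *ᵥ x) with hg
  have hbv : vecMulVec b b *ᵥ x = (b ⬝ᵥ x) • b := by
    ext i
    simp [vecMulVec, mulVec, dotProduct, Finset.mul_sum, mul_comm, mul_assoc, mul_left_comm]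
  have horth : b ⬝ᵥ g = 0 := by
    rw [hg, dotProduct_smul, sub_mulVec, smul_mulVec, ← mulVec_mulVec, hbv,
      one_mulVec, dotProduct_sub, dotProduct_smul, mulVec_smul, dotProduct_smul]
    simp only [smul_eq_mul]
    field_simp
    ring
  have key : euclNorm (b - η • g) ^ 2 = euclNorm b ^ 2 + η ^ 2 * euclNorm g ^ 2 := by
    rw [euclNorm_sq, euclNorm_sq, euclNorm_sq, Finset.mul_sum, ← Finset.sum_add_distrib]
    have : ∀ i ∈ Finset.univ, (b - η • g) i ^ 2
        = b i ^ 2 + η ^ 2 * g i ^ 2 - 2 * η * (b i * g i) := by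
      intro i _
      simp [Pi.sub_apply, Pi.smul_apply, smul_eq_mul]
      ring
    rw [Finset.sum_congr rfl this, Finset.sum_sub_distrib, ← Finset.mul_sum]
    have : ∑ i, b i * g i = 0 := horth
    rw [this, mul_zero, sub_zero]
  refine ⟨key, ?_⟩
  have h1 : euclNorm b ^ 2 ≤ euclNorm (b - η • g) ^ 2 := by
    rw [key]; nlinarith [sq_nonneg η, euclNorm_sq g, sq_nonneg (euclNorm g), mul_nonneg (sq_nonneg η) (sq_nonneg (euclNorm g))]
  exact le_of_pow_le_pow_left₀ two_ne_zero (euclNorm_nonneg _) h1
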